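/- Let n ≥ 0 and let f : ℝ² → ℍ be integrable and have partial derivatives with respect to the second variable t in the L¹ norm of all orders ≤ n, with g = ∂^n f / ∂t^n denoting the n-fold L¹-norm partial derivative with respect to t. Then the right-sided quaternion Fourier transforms satisfy 𝓖_R(u,v) = 𝓕_R(u,v) (j v)^n for all (u,v) ∈ ℝ². -/

import Mathlib

open MeasureTheory Filter Real Set
open scoped Quaternion Topology

noncomputable section

def qi : ℍ[ℝ] := ⟨0,1,0,0⟩
def qj : ℍ[ℝ] := ⟨0,0,1,0⟩

/-- `e^{μθ} = cos θ + μ sin θ` for a (pure unit) quaternion `μ`. -/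
def qexp (μ : ℍ[ℝ]) (θ : ℝ) : ℍ[ℝ] := (Real.cos θ : ℍ[ℝ]) + Real.sin θ • μ

/-- Right-sided quaternion Fourier transform. -/
def QFT_R (f : ℝ × ℝ → ℍ[ℝ]) (u v : ℝ) : ℍ[ℝ] :=
  ∫ p : ℝ × ℝ, f p * qexp qi (-(u * p.1)) * qexp qj (-(v * p.2))

/-- `g` is the partial derivative of `f` with respect to the second variable in the `L¹` norm. -/
def L1PartialDerivT (f g : ℝ × ℝ → ℍ[ℝ]) : Prop :=
  Tendsto (fun h : ℝ => ∫ p : ℝ × ℝ, ‖h⁻¹ • (f (p.1, p.2 + h) - f p) - g p‖)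
    (𝓝[≠] (0:ℝ)) (𝓝 0)


lemma qexp_qj (θ : ℝ) : qexp qj θ = ⟨Real.cos θ, 0, Real.sin θ, 0⟩ := by
  apply Quaternion.ext <;> simp [qexp, Quaternion.re_smul] <;> simp [qj]

lemma qexp_qi (θ : ℝ) : qexp qi θ = ⟨Real.cos θ, Real.sin θ, 0, 0⟩ := by
  apply Quaternion.ext <;> simp [qexp, Quaternion.re_smul] <;> simp [qi]

lemma norm_qexp_qi (θ : ℝ) : ‖qexp qi θ‖ = 1 := by
  rw [norm_eq_sqrt_real_inner, Quaternion.inner_self, Quaternion.normSq_def', qexp_qi]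
  norm_num [Real.sin_sq_add_cos_sq]

lemma norm_qexp_qj (θ : ℝ) : ‖qexp qj θ‖ = 1 := by
  rw [norm_eq_sqrt_real_inner, Quaternion.inner_self, Quaternion.normSq_def', qexp_qj]
  norm_num [Real.sin_sq_add_cos_sq]

lemma qexp_qj_add (a b : ℝ) : qexp qj (a + b) = qexp qj a * qexp qj b := by
  apply Quaternion.ext <;> simp only [Quaternion.re_mul, Quaternion.imI_mul,
    Quaternion.imJ_mul, Quaternion.imK_mul] <;> simp only [qexp_qj, Real.cos_add, Real.sin_add]
  all_goals norm_num
  all_goals ring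

lemma qexp_zero (μ : ℍ[ℝ]) : qexp μ 0 = 1 := by simp [qexp]

lemma continuous_qexp (μ : ℍ[ℝ]) : Continuous (qexp μ) := by
  unfold qexp
  exact (Quaternion.continuous_coe.comp Real.continuous_cos).add
    (Real.continuous_sin.smul continuous_const)

lemma qexp_as_smul (θ : ℝ) : qexp qj θ = Real.cos θ • (1:ℍ[ℝ]) + Real.sin θ • qj := by
  simp [qexp, Quaternion.ext_iff]

lemma integrable_kernel {f : ℝ × ℝ → ℍ[ℝ]} (hf : Integrable f) (u v : ℝ) :
    Integrable (fun p : ℝ × ℝ => f p * qexp qi (-(u * p.1)) * qexp qj (-(v * p.2))) := by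
  have hm : AEStronglyMeasurable
      (fun p : ℝ × ℝ => f p * qexp qi (-(u * p.1)) * qexp qj (-(v * p.2))) volume := by
    apply AEStronglyMeasurable.mul
    apply AEStronglyMeasurable.mul hf.1
    · exact ((continuous_qexp qi).comp (by fun_prop)).aestronglyMeasurable
    · exact ((continuous_qexp qj).comp (by fun_prop)).aestronglyMeasurable
  refine hf.norm.mono' hm ?_
  filter_upwards with p
  simp [norm_mul, norm_qexp_qi, norm_qexp_qj]

lemma integrable_shift {f : ℝ × ℝ → ℍ[ℝ]} (hf : Integrable f) (h : ℝ) :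
    Integrable (fun p : ℝ × ℝ => f (p.1, p.2 + h)) := by
  have := hf.comp_add_right ((0:ℝ), h)
  have heq : (fun t : ℝ × ℝ => f (t + ((0:ℝ), h))) = fun p : ℝ × ℝ => f (p.1, p.2 + h) := by
    funext p
    have hp : p + ((0:ℝ), h) = (p.1, p.2 + h) := by ext <;> simp
    rw [hp]
  rwa [heq] at this

lemma qft_step {f g : ℝ × ℝ → ℍ[ℝ]} (hf : Integrable f) (hg : Integrable g)
    (hfg : L1PartialDerivT f g) (u v : ℝ) :
    QFT_R g u v = QFT_R f u v * (v • qj) := by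
  set e : ℝ × ℝ → ℍ[ℝ] := fun p => qexp qi (-(u * p.1)) * qexp qj (-(v * p.2)) with he
  set Δ : ℝ → ℝ × ℝ → ℍ[ℝ] := fun h p => h⁻¹ • (f (p.1, p.2 + h) - f p) with hΔ
  have hΔint : ∀ h : ℝ, Integrable (Δ h) := fun h =>
    (((integrable_shift hf h).sub hf).smul h⁻¹)
  set φ : ℝ → ℍ[ℝ] := fun h => ∫ p : ℝ × ℝ, Δ h p * qexp qi (-(u * p.1)) * qexp qj (-(v * p.2))
    with hφ
  -- Tendsto to QFT_R g
  have t1 : Tendsto φ (𝓝[≠] (0:ℝ)) (𝓝 (QFT_R g u v)) := by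
    rw [tendsto_iff_norm_sub_tendsto_zero]
    apply squeeze_zero (fun h => norm_nonneg _) _ hfg
    intro h
    have hsub : φ h - QFT_R g u v
        = ∫ p : ℝ × ℝ, (Δ h p - g p) * qexp qi (-(u * p.1)) * qexp qj (-(v * p.2)) := by
      rw [hφ, QFT_R, ← integral_sub (integrable_kernel (hΔint h) u v) (integrable_kernel hg u v)]
      congr 1; funext p; simp [sub_mul]
    rw [hsub]
    calc ‖∫ p : ℝ × ℝ, (Δ h p - g p) * qexp qi (-(u * p.1)) * qexp qj (-(v * p.2))‖
        ≤ ∫ p : ℝ × ℝ, ‖(Δ h p - g p) * qexp qi (-(u * p.1)) * qexp qj (-(v * p.2))‖ :=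
          norm_integral_le_integral_norm _
      _ = ∫ p : ℝ × ℝ, ‖Δ h p - g p‖ := by
          congr 1; funext p; simp [norm_mul, norm_qexp_qi, norm_qexp_qj]
  -- rewrite φ
  have key : ∀ h : ℝ, φ h = QFT_R f u v * (h⁻¹ • (qexp qj (v * h) - 1)) := by
    intro h
    have shift_eq : (∫ p : ℝ × ℝ, f (p.1, p.2 + h) * qexp qi (-(u * p.1))
          * qexp qj (-(v * p.2)))
        = QFT_R f u v * qexp qj (v * h) := by
      have step1 : (∫ p : ℝ × ℝ, f (p.1, p.2 + h) * qexp qi (-(u * p.1))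
            * qexp qj (-(v * p.2)))
          = ∫ p : ℝ × ℝ, f p * qexp qi (-(u * p.1)) * qexp qj (-(v * (p.2 - h))) := by
        have hfun : (fun p : ℝ × ℝ => f (p.1, p.2 + h) * qexp qi (-(u * p.1))
              * qexp qj (-(v * p.2)))
            = fun p : ℝ × ℝ => (fun q : ℝ × ℝ => f q * qexp qi (-(u * q.1))
              * qexp qj (-(v * (q.2 - h)))) (p + ((0:ℝ), h)) := by
          funext p
          have hp : p + ((0:ℝ), h) = (p.1, p.2 + h) := by ext <;> simp
          rw [hp]
          simp
        rw [hfun]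
        exact integral_add_right_eq_self (μ := volume)
          (fun q : ℝ × ℝ => f q * qexp qi (-(u * q.1)) * qexp qj (-(v * (q.2 - h))))
          ((0:ℝ), h)
      have step2 : ∀ t : ℝ, qexp qj (-(v * (t - h))) = qexp qj (-(v * t)) * qexp qj (v * h) := by
        intro t
        rw [← qexp_qj_add]; ring_nf
      rw [step1]
      have := ((ContinuousLinearMap.mul ℝ ℍ[ℝ]).flip (qexp qj (v * h))).integral_comp_comm
        (integrable_kernel hf u v)
      simp only [ContinuousLinearMap.flip_apply, ContinuousLinearMap.mul_apply'] at this
      rw [QFT_R, ← this]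
      congr 1; funext p
      rw [step2 p.2]
      simp [mul_assoc]
    rw [hφ]
    simp only [hΔ, smul_mul_assoc, sub_mul]
    rw [integral_smul, integral_sub (integrable_kernel (integrable_shift hf h) u v)
      (integrable_kernel hf u v)]
    rw [shift_eq]
    rw [QFT_R] at *
    rw [mul_smul_comm, mul_sub, mul_one]
  -- derivative limit
  have t2 : Tendsto (fun h : ℝ => h⁻¹ • (qexp qj (v * h) - 1)) (𝓝[≠] (0:ℝ))
      (𝓝 (v • qj)) := by
    have hder : HasDerivAt (fun h : ℝ => qexp qj (v * h)) (v • qj) 0 := by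
      have hF : (fun h : ℝ => qexp qj (v * h))
          = fun h : ℝ => Real.cos (v * h) • (1:ℍ[ℝ]) + Real.sin (v * h) • qj := by
        funext h; exact qexp_as_smul _
      rw [hF]
      have hlin : HasDerivAt (fun h : ℝ => v * h) v 0 := by
        simpa using (hasDerivAt_id (0:ℝ)).const_mul v
      have hc : HasDerivAt (fun h : ℝ => Real.cos (v * h)) 0 0 := by
        have := (Real.hasDerivAt_cos (v * 0)).comp 0 hlin
        simpa [Function.comp_def] using this
      have hs : HasDerivAt (fun h : ℝ => Real.sin (v * h)) v 0 := by
        have := (Real.hasDerivAt_sin (v * 0)).comp 0 hlin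
        simpa [Function.comp_def] using this
      have := (hc.smul_const (1:ℍ[ℝ])).add (hs.smul_const qj)
      simpa [Pi.add_def] using this
    have heq : slope (fun h : ℝ => qexp qj (v * h)) 0
        = fun h : ℝ => h⁻¹ • (qexp qj (v * h) - 1) := by
      funext h
      simp [slope_fun_def, qexp_zero]
    rw [← heq]
    exact hasDerivAt_iff_tendsto_slope.mp hder
  have t2' : Tendsto (fun h : ℝ => QFT_R f u v * (h⁻¹ • (qexp qj (v * h) - 1)))
      (𝓝[≠] (0:ℝ)) (𝓝 (QFT_R f u v * (v • qj))) := by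
    exact (continuous_mul_left (QFT_R f u v)).continuousAt.tendsto.comp t2
  have t3 : Tendsto φ (𝓝[≠] (0:ℝ)) (𝓝 (QFT_R f u v * (v • qj))) := by
    simpa only [← key] using t2'
  exact tendsto_nhds_unique t1 t3

/-- The right-sided QFT of the `n`-fold `L¹`-norm partial derivative `∂^n f/∂t^n`
equals `𝓕_R(u,v) (jv)^n`. -/
theorem qft_right_sided_iterated_deriv_t
    (n : ℕ) (f : ℝ × ℝ → ℍ[ℝ]) (hf : Integrable f)
    (D : ℕ → (ℝ × ℝ → ℍ[ℝ])) (hD0 : D 0 = f)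
    (hInt : ∀ k ≤ n, Integrable (D k))
    (hDt : ∀ k < n, L1PartialDerivT (D k) (D (k + 1))) :
    ∀ u v : ℝ, QFT_R (D n) u v = QFT_R f u v * (v • qj) ^ n := by
  intro u v
  clear hf
  revert hInt hDt
  induction n with
  | zero => intro hInt hDt; simp [hD0]
  | succ n ih =>
    intro hInt hDt
    have h1 := ih (fun k hk => hInt k (hk.trans n.le_succ))
      (fun k hk => hDt k (hk.trans (Nat.lt_succ_self n)))
    have h2 := qft_step (hInt n (Nat.le_succ n)) (hInt (n+1) le_rfl)
      (hDt n (Nat.lt_succ_self n)) u v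
    rw [h2, h1, pow_succ, mul_assoc]
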